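/- arXiv:1504.07169 — 3 statements merged into one kernel-verified Lean document; each statement's English description precedes it below -/
import Mathlib

section
/- Let f : A → B be a ring homomorphism that is an epimorphism in the category of rings. Then for any two right B-modules M and N, every A-linear map M → N (where M, N are viewed as A-modules via restriction along f) is automatically B-linear. -/
/-- A ring epimorphism: an epimorphism in the category of unital rings. -/
def IsRingEpi {A B : Type} [Ring A] [Ring B] (f : A →+* B) : Prop :=
  ∀ (C : Type) [Ring C], ∀ g h : B →+* C, g.comp f = h.comp f → g = h

/-- If `f : A → B` is a ring epimorphism, then every `A`-linear map
between `B`-modules (viewed as `A`-modules by restriction along `f`) is `B`-linear. -/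
theorem linear_over_base_of_ringEpi
    (A B : Type) [Ring A] [Ring B] (f : A →+* B) (hf : IsRingEpi f)
    (M N : Type) [AddCommGroup M] [AddCommGroup N]
    [Module B M] [Module B N] [Module A M] [Module A N]
    (hM : ∀ (a : A) (m : M), a • m = f a • m)
    (hN : ∀ (a : A) (n : N), a • n = f a • n)
    (φ : M →ₗ[A] N) (b : B) (m : M) :
    φ (b • m) = b • φ m := by
  classical
  -- key: φ intertwines the action of elements in the image of f
  have key : ∀ (a : A) (x : M), φ (f a • x) = f a • φ x := by
    intro a x
    rw [← hM, ← hN, φ.map_smul]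
  -- the diagonal action of B on M × N
  let g : B →+* AddMonoid.End (M × N) := Module.toAddMonoidEnd B (M × N)
  -- the shear automorphism (m, n) ↦ (m, n + φ m)
  let u : M × N ≃+ M × N :=
    { toFun := fun p => (p.1, p.2 + φ p.1)
      invFun := fun p => (p.1, p.2 - φ p.1)
      left_inv := fun p => by simp
      right_inv := fun p => by simp
      map_add' := fun p q => by
        refine Prod.ext rfl ?_
        simp only [Prod.snd_add, Prod.fst_add, map_add]
        abel }
  -- the conjugate of g by u
  let h : B →+* AddMonoid.End (M × N) :=
    { toFun := fun b => (u.toAddMonoidHom.comp (g b)).comp u.symm.toAddMonoidHom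
      map_one' := by
        refine AddMonoidHom.ext fun p => ?_
        show u ((1 : B) • u.symm p) = p
        rw [one_smul, u.apply_symm_apply]
      map_mul' := fun b c => by
        refine AddMonoidHom.ext fun p => ?_
        show u ((b * c) • u.symm p) = u (b • u.symm (u (c • u.symm p)))
        rw [u.symm_apply_apply, mul_smul]
      map_zero' := by
        refine AddMonoidHom.ext fun p => ?_
        show u ((0 : B) • u.symm p) = 0
        rw [zero_smul, map_zero]
      map_add' := fun b c => by
        refine AddMonoidHom.ext fun p => ?_
        show u ((b + c) • u.symm p) = u (b • u.symm p) + u (c • u.symm p)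
        rw [add_smul, map_add] }
  have hgh : g = h := by
    apply hf (AddMonoid.End (M × N)) g h
    refine RingHom.ext fun a => AddMonoidHom.ext fun p => ?_
    show f a • p = u (f a • u.symm p)
    obtain ⟨m', n'⟩ := p
    refine Prod.ext rfl ?_
    show f a • n' = f a • (n' - φ m') + φ (f a • m')
    rw [key, smul_sub]
    abel
  have h2 : (b • m, b • (0 : N)) = u (b • (u.symm (m, 0))) :=
    congrFun (congrArg (fun k : B →+* AddMonoid.End (M × N) => (k b : M × N → M × N)) hgh) (m, 0)
  have h3 : (b • m, b • (0 : N)) =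
      (b • m, b • ((0 : N) - φ m) + φ (b • m)) := h2
  have h4 := congrArg Prod.snd h3
  simp only [smul_zero, zero_sub, smul_neg] at h4
  exact (neg_add_eq_zero.mp h4.symm).symm
end

section
/- Let A be a ring, σ : P → Q a homomorphism of projective right A-modules, and ω : M → N a homomorphism between modules M, N for which Hom_A(σ, M) and Hom_A(σ, N) are bijective. If the class D_σ = {X : Hom_A(σ,X) surjective} is closed under quotients and the class F_σ = {X : Hom_A(σ,X) injective} is closed under submodules, then Hom_A(σ, Im(ω)), Hom_A(σ, Ker(ω)) and Hom_A(σ, Coker(ω)) are all bijective. -/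
private lemma surj_transfer
    (A : Type) [Ring A]
    (P Q : Type) [AddCommGroup P] [AddCommGroup Q] [Module A P] [Module A Q]
    (σ : P →ₗ[A] Q)
    (X Y : Type) [AddCommGroup X] [AddCommGroup Y] [Module A X] [Module A Y]
    (e : X ≃ₗ[A] Y)
    (h : Function.Surjective (fun g : Q →ₗ[A] X => g.comp σ)) :
    Function.Surjective (fun g : Q →ₗ[A] Y => g.comp σ) := by
  intro f
  obtain ⟨g, hg⟩ := h ((e.symm : Y →ₗ[A] X).comp f)
  refine ⟨(e : X →ₗ[A] Y).comp g, ?_⟩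
  ext p
  have := congrArg (fun (h : P →ₗ[A] X) => h p) hg
  simp only [LinearMap.comp_apply] at this ⊢
  simp [this]

/-- Let `σ : P → Q` be a map of projective modules and `ω : M → N` a map
between modules on which `Hom_A(σ, −)` is bijective. If the class `D_σ` (surjectivity of
`Hom_A(σ,−)`) is closed under quotients and `F_σ` (injectivity) is closed under
submodules, then `Hom_A(σ, −)` is bijective on the image, kernel and cokernel of `ω`. -/
theorem homSigma_bijective_on_im_ker_coker
    (A : Type) [Ring A]
    (P Q : Type) [AddCommGroup P] [AddCommGroup Q] [Module A P] [Module A Q]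
    (hP : Module.Projective A P) (hQ : Module.Projective A Q)
    (σ : P →ₗ[A] Q)
    (M N : Type) [AddCommGroup M] [AddCommGroup N] [Module A M] [Module A N]
    (hM : Function.Bijective (fun g : Q →ₗ[A] M => g.comp σ))
    (hN : Function.Bijective (fun g : Q →ₗ[A] N => g.comp σ))
    -- `D_σ` is closed under quotients
    (hD : ∀ (X : Type) [AddCommGroup X], ∀ [Module A X], ∀ (S : Submodule A X),
      Function.Surjective (fun g : Q →ₗ[A] X => g.comp σ) →
      Function.Surjective (fun g : Q →ₗ[A] (X ⧸ S) => g.comp σ))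
    -- `F_σ` is closed under submodules
    (hF : ∀ (X : Type) [AddCommGroup X], ∀ [Module A X], ∀ (S : Submodule A X),
      Function.Injective (fun g : Q →ₗ[A] X => g.comp σ) →
      Function.Injective (fun g : Q →ₗ[A] S => g.comp σ))
    (ω : M →ₗ[A] N) :
    Function.Bijective (fun g : Q →ₗ[A] (LinearMap.range ω) => g.comp σ) ∧
    Function.Bijective (fun g : Q →ₗ[A] (LinearMap.ker ω) => g.comp σ) ∧
    Function.Bijective (fun g : Q →ₗ[A] (N ⧸ LinearMap.range ω) => g.comp σ) := by
  -- surjectivity on the image, via M ⧸ ker ω ≃ range ω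
  have him_surj : Function.Surjective
      (fun g : Q →ₗ[A] (LinearMap.range ω) => g.comp σ) :=
    surj_transfer A P Q σ _ _ (LinearMap.quotKerEquivRange ω)
      (hD M (LinearMap.ker ω) hM.2)
  have him_inj : Function.Injective
      (fun g : Q →ₗ[A] (LinearMap.range ω) => g.comp σ) :=
    hF N (LinearMap.range ω) hN.1
  refine ⟨⟨him_inj, him_surj⟩, ⟨hF M (LinearMap.ker ω) hM.1, ?_⟩, ⟨?_, hD N _ hN.2⟩⟩
  · -- kernel surjectivity
    intro f
    obtain ⟨g, hg⟩ := hM.2 ((LinearMap.ker ω).subtype.comp f)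
    have hωg : ω.comp g = 0 := by
      apply hN.1
      ext p
      have := congrArg (fun (h : P →ₗ[A] M) => ω (h p)) hg
      simp only [LinearMap.comp_apply] at this ⊢
      simp only [LinearMap.zero_comp, LinearMap.zero_apply, this,
        Submodule.coe_subtype]
      exact (f p).2
    have hmem : ∀ q : Q, g q ∈ LinearMap.ker ω := fun q => by
      have := congrArg (fun (h : Q →ₗ[A] N) => h q) hωg
      simpa using this
    refine ⟨g.codRestrict (LinearMap.ker ω) hmem, ?_⟩
    ext p
    have := congrArg (fun (h : P →ₗ[A] M) => h p) hg
    simp only [LinearMap.comp_apply, Submodule.coe_subtype] at this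
    simpa [LinearMap.codRestrict] using this
  · -- cokernel injectivity
    intro g₁ g₂ hcomp
    have hzero : (g₁ - g₂).comp σ = 0 := by
      simp only at hcomp
      ext p
      have := congrArg (fun (h : P →ₗ[A] (N ⧸ LinearMap.range ω)) => h p) hcomp
      simp only [LinearMap.comp_apply] at this ⊢
      simp [this]
    set g := g₁ - g₂ with hgdef
    rw [← sub_eq_zero]
    show g = 0
    -- lift g through the quotient using projectivity of Q
    obtain ⟨gh, hgh⟩ := Module.projective_lifting_property
      (Submodule.mkQ (LinearMap.range ω)) g (Submodule.mkQ_surjective _)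
    -- gh.comp σ lands in range ω
    have hmem : ∀ p : P, gh (σ p) ∈ LinearMap.range ω := fun p => by
      have h1 := congrArg (fun (h : Q →ₗ[A] (N ⧸ LinearMap.range ω)) => h (σ p)) hgh
      have h2 := congrArg (fun (h : P →ₗ[A] (N ⧸ LinearMap.range ω)) => h p) hzero
      simp only [LinearMap.comp_apply, Submodule.mkQ_apply] at h1 h2
      simp only [LinearMap.zero_apply] at h2
      rw [← Submodule.Quotient.mk_eq_zero (LinearMap.range ω), h1, h2]
    obtain ⟨k, hk⟩ := him_surj ((gh.comp σ).codRestrict (LinearMap.range ω) hmem)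
    have : gh = (LinearMap.range ω).subtype.comp k := by
      apply hN.1
      ext p
      have := congrArg (fun (h : P →ₗ[A] (LinearMap.range ω)) => ((h p : N))) hk
      simp only [LinearMap.comp_apply, LinearMap.codRestrict] at this ⊢
      exact this.symm
    rw [← hgh, this]
    ext q
    simp [Submodule.Quotient.mk_eq_zero]
end

section
/- Let f : A → B be a ring epimorphism, let σ : P → Q be a homomorphism of finitely generated projective right A-modules, and suppose that for every right B-module X (restricted to A via f) the map Hom_A(σ, X) is bijective. Then σ ⊗_A B : P ⊗_A B → Q ⊗_A B is an isomorphism of right B-modules. -/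
open TensorProduct

/-- Let `f : A → B` be a ring epimorphism and `σ : P → Q` a map of
finitely generated projective `A`-modules such that `Hom_A(σ, X)` is bijective for every
`B`-module `X` (restricted to `A` along `f`). Then `σ ⊗_A B` is an isomorphism of
`B`-modules. -/
theorem baseChange_iso_of_hom_bijective
    (A B : Type) [CommRing A] [CommRing B] [Algebra A B]
    (hf : IsRingEpi (algebraMap A B))
    (P Q : Type) [AddCommGroup P] [AddCommGroup Q] [Module A P] [Module A Q]
    (hP : Module.Projective A P) (hQ : Module.Projective A Q)
    (hPfg : Module.Finite A P) (hQfg : Module.Finite A Q)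
    (σ : P →ₗ[A] Q)
    (hhom : ∀ (X : Type) [AddCommGroup X], ∀ [Module A X] [Module B X],
      ∀ [IsScalarTower A B X],
      Function.Bijective (fun g : Q →ₗ[A] X => g.comp σ)) :
    Function.Bijective (LinearMap.baseChange B σ : B ⊗[A] P →ₗ[B] B ⊗[A] Q) := by
  set φ : B ⊗[A] P →ₗ[B] B ⊗[A] Q := LinearMap.baseChange B σ with hφ
  constructor
  · -- injectivity: find a left inverse
    obtain ⟨g, hg⟩ := (hhom (B ⊗[A] P)).surjective (TensorProduct.mk A B P 1)
    set gB : B ⊗[A] Q →ₗ[B] B ⊗[A] P := LinearMap.liftBaseChange B g with hgB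
    have hcomp : gB.comp φ = LinearMap.id := by
      apply LinearMap.ext
      intro x
      induction x using TensorProduct.induction_on with
      | zero => simp
      | tmul b p =>
          have : g (σ p) = 1 ⊗ₜ[A] p := congrArg (fun h => h p) hg
          simp [gB, φ, LinearMap.baseChange_tmul, this, TensorProduct.smul_tmul',
            LinearMap.liftBaseChange_tmul]
      | add x y hx hy => simp [map_add, hx, hy]
    intro x y hxy
    have := congrArg gB hxy
    have hx := congrArg (fun h => h x) hcomp
    have hy := congrArg (fun h => h y) hcomp
    simp only [LinearMap.comp_apply, LinearMap.id_apply] at hx hy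
    rw [← hx, ← hy]
    exact this
  · -- surjectivity
    set N : Submodule B (B ⊗[A] Q) := LinearMap.range φ with hN
    set g1 : Q →ₗ[A] ((B ⊗[A] Q) ⧸ N) :=
      (N.mkQ.restrictScalars A).comp (TensorProduct.mk A B Q 1) with hg1
    have hz : g1.comp σ = 0 := by
      apply LinearMap.ext
      intro p
      have : (1 : B) ⊗ₜ[A] σ p ∈ N := ⟨(1 : B) ⊗ₜ[A] p, by simp [φ]⟩
      simpa [g1, Submodule.Quotient.mk_eq_zero] using this
    have hg1z : g1 = 0 := (hhom ((B ⊗[A] Q) ⧸ N)).injective (by simpa using hz)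
    have hmem : ∀ q : Q, (1 : B) ⊗ₜ[A] q ∈ N := by
      intro q
      have := congrArg (fun h => h q) hg1z
      simpa [g1, Submodule.Quotient.mk_eq_zero] using this
    intro y
    have : y ∈ N := by
      induction y using TensorProduct.induction_on with
      | zero => exact N.zero_mem
      | tmul b q =>
          have := N.smul_mem b (hmem q)
          simpa [TensorProduct.smul_tmul'] using this
      | add x y hx hy => exact N.add_mem hx hy
    exact this
end
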